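/- Suppose U(z) and Ũ(z) are two m×m matrix-functions, both unitary on the unit circle with constant determinant, whose first m−1 rows have entries in L_g^+ and last row entries in L_g^+ conjugated (i.e., of form (13),(14)), and suppose there is a single F(z) of the lower-triangular unipotent form (identity except the last row (φ_1,...,φ_{m-1},1) with φ_j ∈ L_g^−) such that F(z)U(z) ∈ L_g^+ and F(z)Ũ(z) ∈ L_g^+ entrywise. Then Ũ(z) = U(z)·C for some constant unitary matrix C. -/

import Mathlib

open Matrix Finset Polynomial

/-- A function agreeing with a polynomial away from 0. -/
def PolyOn (f : ℂ → ℂ) : Prop := ∃ p : Polynomial ℂ, ∀ z : ℂ, z ≠ 0 → f z = p.eval z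

lemma polyOn_const (c : ℂ) : PolyOn (fun _ => c) := ⟨Polynomial.C c, fun _ _ => by simp⟩

lemma PolyOn.add {f g : ℂ → ℂ} (hf : PolyOn f) (hg : PolyOn g) :
    PolyOn (fun z => f z + g z) := by
  obtain ⟨p, hp⟩ := hf; obtain ⟨q, hq⟩ := hg
  exact ⟨p + q, fun z hz => by simp [hp z hz, hq z hz]⟩

lemma PolyOn.mul {f g : ℂ → ℂ} (hf : PolyOn f) (hg : PolyOn g) :
    PolyOn (fun z => f z * g z) := by
  obtain ⟨p, hp⟩ := hf; obtain ⟨q, hq⟩ := hg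
  exact ⟨p * q, fun z hz => by simp [hp z hz, hq z hz]⟩

lemma PolyOn.congr {f g : ℂ → ℂ} (hf : PolyOn f) (h : ∀ z : ℂ, z ≠ 0 → g z = f z) :
    PolyOn g := by
  obtain ⟨p, hp⟩ := hf
  exact ⟨p, fun z hz => (h z hz).trans (hp z hz)⟩

lemma polyOn_sum {ι : Type*} (s : Finset ι) (f : ι → ℂ → ℂ)
    (h : ∀ i ∈ s, PolyOn (f i)) : PolyOn (fun z => ∑ i ∈ s, f i z) := by
  classical
  induction s using Finset.cons_induction with
  | empty => simpa using polyOn_const 0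
  | cons a s ha ih =>
    simp only [Finset.sum_cons]
    exact (h a (Finset.mem_cons_self a s)).add
      (ih fun i hi => h i (Finset.mem_cons_of_mem hi))

lemma polyOn_prod {ι : Type*} (s : Finset ι) (f : ι → ℂ → ℂ)
    (h : ∀ i ∈ s, PolyOn (f i)) : PolyOn (fun z => ∏ i ∈ s, f i z) := by
  classical
  induction s using Finset.cons_induction with
  | empty => simpa using polyOn_const 1
  | cons a s ha ih =>
    simp only [Finset.prod_cons]
    exact (h a (Finset.mem_cons_self a s)).mul
      (ih fun i hi => h i (Finset.mem_cons_of_mem hi))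

/-- Entrywise polynomial matrix function. -/
def MatPolyOn {m : ℕ} (V : ℂ → Matrix (Fin m) (Fin m) ℂ) : Prop :=
  ∀ i j : Fin m, PolyOn (fun z => V z i j)

lemma MatPolyOn.det {m : ℕ} {V : ℂ → Matrix (Fin m) (Fin m) ℂ} (h : MatPolyOn V) :
    PolyOn (fun z => (V z).det) := by
  have : (fun z => (V z).det)
      = fun z => ∑ σ : Equiv.Perm (Fin m),
          ((Equiv.Perm.sign σ : ℤ) : ℂ) * ∏ i, V z (σ i) i := by
    funext z; exact Matrix.det_apply' (V z)
  rw [this]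
  exact polyOn_sum _ _ fun σ _ =>
    (polyOn_const _).mul (polyOn_prod _ _ fun i _ => h (σ i) i)

lemma MatPolyOn.adjugate {m : ℕ} {V : ℂ → Matrix (Fin m) (Fin m) ℂ} (h : MatPolyOn V) :
    MatPolyOn (fun z => (V z).adjugate) := by
  intro i j
  have : (fun z => (V z).adjugate i j)
      = fun z => ((V z).updateRow j (Pi.single i 1)).det := by
    funext z; exact Matrix.adjugate_apply (V z) i j
  rw [this]
  exact MatPolyOn.det (fun a b => by
    by_cases hA : a = j
    · subst hA
      have : (fun z => (V z).updateRow a (Pi.single i 1) a b)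
          = fun _ => if b = i then (1:ℂ) else 0 := by
        funext z; simp [Matrix.updateRow_apply, Pi.single_apply]
      rw [this]; exact polyOn_const _
    · have : (fun z => (V z).updateRow j (Pi.single i 1) a b) = fun z => V z a b := by
        funext z; simp [Matrix.updateRow_apply, hA]
      rw [this]; exact h a b)

lemma infinite_sphere : {z : ℂ | ‖z‖ = 1}.Infinite := by
  have h1 : Set.InjOn (fun θ : ℝ => Complex.exp (θ * Complex.I)) (Set.Ioo 0 Real.pi) := by
    intro a ha b hb hab
    have hcos : Real.cos a = Real.cos b := by
      have := congrArg Complex.re hab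
      simpa [Complex.exp_ofReal_mul_I_re] using this
    exact Real.injOn_cos ⟨ha.1.le, ha.2.le⟩ ⟨hb.1.le, hb.2.le⟩ hcos
  have h2 : (Set.Ioo (0 : ℝ) Real.pi).Infinite := Set.Ioo_infinite Real.pi_pos
  refine (h2.image h1).mono ?_
  rintro z ⟨θ, _, rfl⟩
  simp [Complex.norm_exp_ofReal_mul_I]

lemma poly_eq_of_sphere {p q : Polynomial ℂ}
    (h : ∀ z : ℂ, ‖z‖ = 1 → p.eval z = q.eval z) : p = q :=
  Polynomial.eq_of_infinite_eval_eq p q (infinite_sphere.mono fun z hz => h z hz)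

lemma conj_eq_inv_of_sphere {z : ℂ} (hz : ‖z‖ = 1) : (starRingEnd ℂ) z = z⁻¹ := by
  have h1 : z * (starRingEnd ℂ) z = 1 := by
    rw [Complex.mul_conj]
    norm_cast
    rw [Complex.normSq_eq_norm_sq, hz]; norm_num
  exact (inv_eq_of_mul_eq_one_right h1).symm

lemma eval_const_of_conj_on_sphere {p q : Polynomial ℂ}
    (h : ∀ z : ℂ, ‖z‖ = 1 → q.eval z = (starRingEnd ℂ) (p.eval z)) :
    ∀ z : ℂ, p.eval z = p.coeff 0 := by
  set n := p.natDegree with hn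
  set s : Polynomial ℂ := ∑ k ∈ Finset.range (n + 1),
      Polynomial.C ((starRingEnd ℂ) (p.coeff k)) * Polynomial.X ^ (n - k) with hs
  have heq : Polynomial.X ^ n * q = s := by
    apply poly_eq_of_sphere
    intro z hz
    have hz0 : z ≠ 0 := by
      intro h0; rw [h0] at hz; simp at hz
    have hzc := conj_eq_inv_of_sphere hz
    have hev : p.eval z = ∑ k ∈ Finset.range (n + 1), p.coeff k * z ^ k :=
      Polynomial.eval_eq_sum_range z
    have hq := h z hz
    rw [hev, map_sum] at hq
    rw [Polynomial.eval_mul, Polynomial.eval_pow, Polynomial.eval_X, hq, hs]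
    rw [Polynomial.eval_finset_sum, Finset.mul_sum]
    refine Finset.sum_congr rfl fun k hk => ?_
    have hkn : k ≤ n := Nat.lt_succ_iff.mp (Finset.mem_range.mp hk)
    rw [Polynomial.eval_mul, Polynomial.eval_pow, Polynomial.eval_X, Polynomial.eval_C,
      _root_.map_mul, map_pow, hzc, inv_pow, pow_sub₀ z hz0 hkn]
    ring
  have hcoeff : ∀ k : ℕ, 1 ≤ k → p.coeff k = 0 := by
    intro k hk
    by_cases hkn : k ≤ n
    · have hcongr := congrArg (fun r => Polynomial.coeff r (n - k)) heq
      have hL : (Polynomial.X ^ n * q).coeff (n - k) = 0 := by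
        rw [mul_comm, Polynomial.coeff_mul_X_pow']
        have : ¬ n ≤ n - k := by omega
        simp [this]
      have hR : s.coeff (n - k) = (starRingEnd ℂ) (p.coeff k) := by
        rw [hs, Polynomial.finset_sum_coeff]
        rw [Finset.sum_eq_single k]
        · simp [Polynomial.coeff_C_mul, Polynomial.coeff_X_pow]
        · intro b hb hbk
          have hbn : b ≤ n := Nat.lt_succ_iff.mp (Finset.mem_range.mp hb)
          have : n - k ≠ n - b := by omega
          simp [Polynomial.coeff_C_mul, Polynomial.coeff_X_pow, this]
        · intro hkmem
          exact absurd (Finset.mem_range.mpr (Nat.lt_succ_of_le hkn)) hkmem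
      rw [hL, hR] at hcongr
      have := hcongr.symm
      exact (starRingEnd ℂ).injective (by simpa using this)
    · exact Polynomial.coeff_eq_zero_of_natDegree_lt (by omega)
  intro z
  have hev2 : p.eval z = ∑ k ∈ Finset.range (n + 1), p.coeff k * z ^ k :=
    Polynomial.eval_eq_sum_range z
  rw [hev2, Finset.sum_eq_single 0]
  · simp
  · intro b _ hb
    rw [hcoeff b (by omega)]; ring
  · intro h0; exact absurd (Finset.mem_range.mpr (by omega)) h0
/-- The unipotent matrix-function which is the identity except that its last row
is `(φ₁, …, φ_{m−1}, 1)`. -/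
noncomputable def unipLast {m : ℕ} (φ : Fin m → ℂ → ℂ) (z : ℂ) :
    Matrix (Fin m) (Fin m) ℂ :=
  Matrix.of fun i j : Fin m =>
    if (i : ℕ) = m - 1 then (if (j : ℕ) = m - 1 then 1 else φ j z)
    else (if i = j then 1 else 0)

/-- `U` has the row structure (13),(14): entries of the first `m−1` rows in `L_g⁺`,
entries of the last row conjugates of `L_g⁺` functions, i.e. in `L_g⁻`. -/
def RowStructure {m : ℕ} (g : ℕ) (U : ℂ → Matrix (Fin m) (Fin m) ℂ) : Prop :=
  (∀ i j : Fin m, (i : ℕ) < m - 1 → ∃ co : ℕ → ℂ, ∀ z : ℂ, z ≠ 0 →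
      U z i j = ∑ k ∈ Finset.range (g + 1), co k * z ^ k) ∧
  (∀ i j : Fin m, (i : ℕ) = m - 1 → ∃ co : ℕ → ℂ, ∀ z : ℂ, z ≠ 0 →
      U z i j = ∑ k ∈ Finset.range (g + 1), (starRingEnd ℂ) (co k) * z ^ (-(k : ℤ)))

/-- If two matrix-functions `U`, `Ũ`, unitary on the unit circle, with constant
determinant and row structure (13),(14), are sent into `L_g⁺` by the same unipotent
factor `F`, then `Ũ(z) = U(z)·C` for a constant unitary matrix `C`. -/
theorem unique_up_to_constant_unitary {m g : ℕ} (hm : 0 < m)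
    (U Ut : ℂ → Matrix (Fin m) (Fin m) ℂ)
    (hUcirc : ∀ z : ℂ, ‖z‖ = 1 → U z * (U z)ᴴ = 1)
    (hUtcirc : ∀ z : ℂ, ‖z‖ = 1 → Ut z * (Ut z)ᴴ = 1)
    (hUdet : ∃ c : ℂ, ∀ z : ℂ, z ≠ 0 → (U z).det = c)
    (hUtdet : ∃ c : ℂ, ∀ z : ℂ, z ≠ 0 → (Ut z).det = c)
    (hUrows : RowStructure g U) (hUtrows : RowStructure g Ut)
    (φ : Fin m → ℂ → ℂ)
    (hφ : ∀ j : Fin m, (j : ℕ) < m - 1 → ∃ co : ℕ → ℂ, ∀ z : ℂ, z ≠ 0 →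
      φ j z = ∑ k ∈ Finset.range (g + 1), co k * z ^ (-(k : ℤ)))
    (hFU : ∀ i j : Fin m, ∃ co : ℕ → ℂ, ∀ z : ℂ, z ≠ 0 →
      (unipLast φ z * U z) i j = ∑ k ∈ Finset.range (g + 1), co k * z ^ k)
    (hFUt : ∀ i j : Fin m, ∃ co : ℕ → ℂ, ∀ z : ℂ, z ≠ 0 →
      (unipLast φ z * Ut z) i j = ∑ k ∈ Finset.range (g + 1), co k * z ^ k) :
    ∃ C ∈ Matrix.unitaryGroup (Fin m) ℂ, ∀ z : ℂ, z ≠ 0 → Ut z = U z * C := by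
  classical
  obtain ⟨c, hc⟩ := hUdet
  obtain ⟨c', hc'⟩ := hUtdet
  set l : Fin m := ⟨m - 1, by omega⟩ with hl
  -- the unipotent factor is the identity with updated last row
  have hFrow : ∀ z : ℂ, unipLast φ z =
      (1 : Matrix (Fin m) (Fin m) ℂ).updateRow l
        (fun j => if (j : ℕ) = m - 1 then 1 else φ j z) := by
    intro z
    ext i j
    by_cases hi : (i : ℕ) = m - 1
    · have hil : i = l := Fin.ext (by simpa [hl] using hi)
      subst hil
      simp [unipLast, Matrix.updateRow_self, hi]
    · have hil : i ≠ l := fun h => hi (by rw [h])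
      simp [unipLast, Matrix.updateRow_ne hil, hi, Matrix.one_apply]
  have hFdet : ∀ z : ℂ, (unipLast φ z).det = 1 := by
    intro z
    rw [hFrow z]
    have h1 := Matrix.cramer_transpose_apply
      (A := (1 : Matrix (Fin m) (Fin m) ℂ))
      (b := fun j => if (j : ℕ) = m - 1 then 1 else φ j z) l
    rw [Matrix.transpose_one, Matrix.cramer_one] at h1
    rw [← h1]
    simp [hl]
  have hFunit : ∀ z : ℂ, IsUnit (unipLast φ z).det := fun z => by
    rw [hFdet z]; exact isUnit_one
  have hFinv : ∀ z : ℂ, (unipLast φ z)⁻¹ * unipLast φ z = 1 := fun z =>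
    Matrix.nonsing_inv_mul _ (hFunit z)
  have hone : ‖(1 : ℂ)‖ = 1 := by simp
  have hdetne : ∀ A : Matrix (Fin m) (Fin m) ℂ, A * Aᴴ = 1 → A.det ≠ 0 := by
    intro A hA
    have h2 := congrArg Matrix.det hA
    rw [Matrix.det_mul, Matrix.det_one] at h2
    exact left_ne_zero_of_mul_eq_one h2
  have hc0 : c ≠ 0 := by rw [← hc 1 one_ne_zero]; exact hdetne _ (hUcirc 1 hone)
  have hc'0 : c' ≠ 0 := by rw [← hc' 1 one_ne_zero]; exact hdetne _ (hUtcirc 1 hone)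
  have hUunit : ∀ z : ℂ, z ≠ 0 → IsUnit (U z).det := fun z hz => by
    rw [hc z hz]; exact isUnit_iff_ne_zero.mpr hc0
  have hUtunit : ∀ z : ℂ, z ≠ 0 → IsUnit (Ut z).det := fun z hz => by
    rw [hc' z hz]; exact isUnit_iff_ne_zero.mpr hc'0
  -- V = F·U and Ṽ = F·Ũ are entrywise polynomial
  have hVpoly : MatPolyOn (fun z => unipLast φ z * U z) := by
    intro i j
    obtain ⟨co, hco⟩ := hFU i j
    refine ⟨∑ k ∈ Finset.range (g + 1), Polynomial.C (co k) * Polynomial.X ^ k,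
      fun z hz => ?_⟩
    show (unipLast φ z * U z) i j = _
    rw [hco z hz, Polynomial.eval_finset_sum]
    simp
  have hVtpoly : MatPolyOn (fun z => unipLast φ z * Ut z) := by
    intro i j
    obtain ⟨co, hco⟩ := hFUt i j
    refine ⟨∑ k ∈ Finset.range (g + 1), Polynomial.C (co k) * Polynomial.X ^ k,
      fun z hz => ?_⟩
    show (unipLast φ z * Ut z) i j = _
    rw [hco z hz, Polynomial.eval_finset_sum]
    simp
  have hVdet : ∀ z : ℂ, z ≠ 0 → (unipLast φ z * U z).det = c := fun z hz => by
    rw [Matrix.det_mul, hFdet z, one_mul, hc z hz]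
  have hVtdet : ∀ z : ℂ, z ≠ 0 → (unipLast φ z * Ut z).det = c' := fun z hz => by
    rw [Matrix.det_mul, hFdet z, one_mul, hc' z hz]
  -- W(z) = U(z)⁻¹ Ũ(z) and its inverse are entrywise polynomial
  have hWV : ∀ z : ℂ, z ≠ 0 →
      (U z)⁻¹ * Ut z = (unipLast φ z * U z)⁻¹ * (unipLast φ z * Ut z) := by
    intro z hz
    rw [Matrix.mul_inv_rev, Matrix.mul_assoc,
      ← Matrix.mul_assoc ((unipLast φ z)⁻¹), hFinv z, Matrix.one_mul]
  have hW'V : ∀ z : ℂ, z ≠ 0 →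
      (Ut z)⁻¹ * U z = (unipLast φ z * Ut z)⁻¹ * (unipLast φ z * U z) := by
    intro z hz
    rw [Matrix.mul_inv_rev, Matrix.mul_assoc,
      ← Matrix.mul_assoc ((unipLast φ z)⁻¹), hFinv z, Matrix.one_mul]
  have key : ∀ (A B : ℂ → Matrix (Fin m) (Fin m) ℂ) (d : ℂ),
      MatPolyOn A → MatPolyOn B → (∀ z : ℂ, z ≠ 0 → (A z).det = d) →
      MatPolyOn (fun z => (A z)⁻¹ * B z) := by
    intro A B d hA hB hd
    have hAdj : MatPolyOn (fun z => (A z).adjugate * B z) := by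
      intro i j
      have hrw : (fun z => ((A z).adjugate * B z) i j)
          = fun z => ∑ k, (A z).adjugate i k * B z k j := by
        funext z; exact Matrix.mul_apply
      rw [hrw]
      exact polyOn_sum _ _ fun k _ => (hA.adjugate i k).mul (hB k j)
    intro i j
    refine ((polyOn_const d⁻¹).mul (hAdj i j)).congr ?_
    intro z hz
    have h1 : (A z)⁻¹ * B z = d⁻¹ • ((A z).adjugate * B z) := by
      rw [Matrix.inv_def, hd z hz, Ring.inverse_eq_inv, Matrix.smul_mul]
    show ((A z)⁻¹ * B z) i j = d⁻¹ * ((A z).adjugate * B z) i j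
    rw [h1]
    simp [Matrix.smul_apply, smul_eq_mul]
  have hWpoly : MatPolyOn (fun z => (U z)⁻¹ * Ut z) := by
    intro i j
    refine (key (fun z => unipLast φ z * U z) (fun z => unipLast φ z * Ut z) c
      hVpoly hVtpoly hVdet i j).congr ?_
    intro z hz
    show ((U z)⁻¹ * Ut z) i j = ((unipLast φ z * U z)⁻¹ * (unipLast φ z * Ut z)) i j
    rw [hWV z hz]
  have hW'poly : MatPolyOn (fun z => (Ut z)⁻¹ * U z) := by
    intro i j
    refine (key (fun z => unipLast φ z * Ut z) (fun z => unipLast φ z * U z) c'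
      hVtpoly hVpoly hVtdet i j).congr ?_
    intro z hz
    show ((Ut z)⁻¹ * U z) i j = ((unipLast φ z * Ut z)⁻¹ * (unipLast φ z * U z)) i j
    rw [hW'V z hz]
  obtain ⟨P, hP⟩ : ∃ P : Fin m → Fin m → Polynomial ℂ, ∀ i j (z : ℂ), z ≠ 0 →
      ((U z)⁻¹ * Ut z) i j = (P i j).eval z := by
    choose P hP using hWpoly
    exact ⟨P, fun i j => hP i j⟩
  obtain ⟨Q, hQ⟩ : ∃ Q : Fin m → Fin m → Polynomial ℂ, ∀ i j (z : ℂ), z ≠ 0 →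
      ((Ut z)⁻¹ * U z) i j = (Q i j).eval z := by
    choose Q hQ using hW'poly
    exact ⟨Q, fun i j => hQ i j⟩
  -- on the circle, W is unitary, so Q i j = conj ∘ P j i there
  have hconj : ∀ (i j : Fin m) (z : ℂ), ‖z‖ = 1 →
      (Q i j).eval z = (starRingEnd ℂ) ((P j i).eval z) := by
    intro i j z hz
    have hz0 : z ≠ 0 := fun h => by simp [h] at hz
    have hUinv : (U z)⁻¹ = (U z)ᴴ := Matrix.inv_eq_right_inv (hUcirc z hz)
    have hUtinv : (Ut z)⁻¹ = (Ut z)ᴴ := Matrix.inv_eq_right_inv (hUtcirc z hz)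
    have hWW : ((Ut z)⁻¹ * U z) i j = (starRingEnd ℂ) (((U z)⁻¹ * Ut z) j i) := by
      rw [hUinv, hUtinv]
      have hct : (Ut z)ᴴ * U z = ((U z)ᴴ * Ut z)ᴴ := by
        rw [Matrix.conjTranspose_mul, Matrix.conjTranspose_conjTranspose]
      rw [hct, Matrix.conjTranspose_apply, starRingEnd_apply]
    rw [← hQ i j z hz0, ← hP j i z hz0]
    exact hWW
  have hconst : ∀ (i j : Fin m) (z : ℂ), (P i j).eval z = (P i j).coeff 0 :=
    fun i j => eval_const_of_conj_on_sphere (fun z hz => hconj j i z hz)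
  refine ⟨(U 1)⁻¹ * Ut 1, ?_, ?_⟩
  · have hUinv : (U 1)⁻¹ = (U 1)ᴴ := Matrix.inv_eq_right_inv (hUcirc 1 hone)
    rw [Matrix.mem_unitaryGroup_iff, hUinv, Matrix.star_eq_conjTranspose,
      Matrix.conjTranspose_mul, Matrix.conjTranspose_conjTranspose]
    calc (U 1)ᴴ * Ut 1 * ((Ut 1)ᴴ * U 1)
        = (U 1)ᴴ * (Ut 1 * (Ut 1)ᴴ) * U 1 := by
          rw [Matrix.mul_assoc, Matrix.mul_assoc, Matrix.mul_assoc]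
      _ = (U 1)ᴴ * U 1 := by rw [hUtcirc 1 hone, Matrix.mul_one]
      _ = 1 := mul_eq_one_comm.mp (hUcirc 1 hone)
  · intro z hz
    have hWeq : (U z)⁻¹ * Ut z = (U 1)⁻¹ * Ut 1 := by
      ext i j
      rw [hP i j z hz, hP i j 1 one_ne_zero, hconst i j z, hconst i j 1]
    calc Ut z = U z * ((U z)⁻¹ * Ut z) := by
          rw [← Matrix.mul_assoc, Matrix.mul_nonsing_inv _ (hUunit z hz), Matrix.one_mul]
      _ = U z * ((U 1)⁻¹ * Ut 1) := by rw [hWeq]
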